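/- Let L be a normed field whose norm is nonarchimedean (the distance is ultrametric), let θ ∈ L and n a natural number. For a polynomial f ∈ L[t] with natDegree f ≤ n set ‖f‖_θ := max_{0≤i≤n} ‖(hasseDeriv i f).eval θ‖ and ‖f‖ := max_{0≤i≤n} ‖f.coeff i‖ (the Gauss norm). If (f_k) is a sequence of polynomials in L[t] with natDegree f_k ≤ n for all k and ‖f_k‖_θ → 0 as k → ∞, then ‖f_k‖ → 0 as k → ∞. -/

import Mathlib

/-- Over a nonarchimedean normed field, if a sequence of polynomials of
degree at most `n` tends to zero in the norm `‖·‖_θ` given by the maximum of the norms of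
the Hasse-derivative values at `θ`, then it tends to zero in the Gauss norm, i.e. the
maximum of the norms of the coefficients. -/
theorem gauss_norm_tendsto_zero_of_theta_norm_tendsto_zero
    (L : Type*) [NormedField L] [IsUltrametricDist L] (θ : L) (n : ℕ)
    (f : ℕ → Polynomial L) (hdeg : ∀ k, (f k).natDegree ≤ n)
    (h : Filter.Tendsto
      (fun k => (Finset.range (n + 1)).sup
        fun i => ‖(Polynomial.hasseDeriv i (f k)).eval θ‖₊)
      Filter.atTop (nhds 0)) :
    Filter.Tendsto
      (fun k => (Finset.range (n + 1)).sup fun i => ‖(f k).coeff i‖₊)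
      Filter.atTop (nhds 0) := by
  classical
  set C : NNReal :=
    ((Finset.range (n + 1)) ×ˢ (Finset.range (n + 1))).sup
      (fun p => ‖((Polynomial.X - Polynomial.C θ) ^ p.2).coeff p.1‖₊) with hC
  have key : ∀ k, ((Finset.range (n + 1)).sup fun i => ‖(f k).coeff i‖₊)
      ≤ C * ((Finset.range (n + 1)).sup
        fun i => ‖(Polynomial.hasseDeriv i (f k)).eval θ‖₊) := by
    intro k
    set g : NNReal := (Finset.range (n + 1)).sup
      fun i => ‖(Polynomial.hasseDeriv i (f k)).eval θ‖₊ with hg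
    refine Finset.sup_le fun i hi => ?_
    -- Taylor expansion
    have hexp : f k = ∑ j ∈ Finset.range (n + 1),
        Polynomial.C ((Polynomial.taylor θ (f k)).coeff j) *
          (Polynomial.X - Polynomial.C θ) ^ j := by
      conv_lhs => rw [← Polynomial.sum_taylor_eq (f k) θ]
      rw [Polynomial.sum_over_range' _ (by simp) (n + 1)
        (by rw [Polynomial.natDegree_taylor]; exact Nat.lt_succ_of_le (hdeg k))]
    have hco : (f k).coeff i = ∑ j ∈ Finset.range (n + 1),
        (Polynomial.taylor θ (f k)).coeff j *
          ((Polynomial.X - Polynomial.C θ) ^ j).coeff i := by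
      conv_lhs => rw [hexp]
      simp [Polynomial.finset_sum_coeff, Polynomial.coeff_C_mul]
    rw [hco]
    refine le_trans (Finset.nnnorm_sum_le_sup_nnnorm _ _) (Finset.sup_le fun j hj => ?_)
    rw [nnnorm_mul]
    have h1 : ‖(Polynomial.taylor θ (f k)).coeff j‖₊ ≤ g := by
      rw [Polynomial.taylor_coeff]
      exact Finset.le_sup (f := fun i => ‖(Polynomial.hasseDeriv i (f k)).eval θ‖₊) hj
    have h2 : ‖((Polynomial.X - Polynomial.C θ) ^ j).coeff i‖₊ ≤ C :=
      Finset.le_sup (f := fun p : ℕ × ℕ =>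
        ‖((Polynomial.X - Polynomial.C θ) ^ p.2).coeff p.1‖₊)
        (Finset.mk_mem_product hi hj)
    calc ‖(Polynomial.taylor θ (f k)).coeff j‖₊ *
        ‖((Polynomial.X - Polynomial.C θ) ^ j).coeff i‖₊ ≤ g * C :=
          mul_le_mul' h1 h2
      _ = C * g := mul_comm _ _
  have hCg : Filter.Tendsto (fun k => C * ((Finset.range (n + 1)).sup
      fun i => ‖(Polynomial.hasseDeriv i (f k)).eval θ‖₊)) Filter.atTop (nhds 0) := by
    simpa using h.const_mul C
  exact tendsto_of_tendsto_of_tendsto_of_le_of_le tendsto_const_nhds hCg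
    (fun k => zero_le) key
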